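/- Let e_1,...,e_K ∈ ℝ^d be a simplex ETF. For any feature vector m with ‖m‖ ≤ 1 and class index k, define the cross-entropy loss L(m) = -log( exp(e_k^T m) / ∑_{j=1}^K exp(e_j^T m) ). Then L(m) ≥ L(e_k), with equality iff m = e_k. That is, m = e_k is the unique global minimizer of the CE loss under fixed ETF prototypes on the unit ball. -/

import Mathlib

open scoped RealInnerProductSpace

open Finset Real

/-- With fixed simplex-ETF prototypes, `m = e_k` is the unique global minimizer on the
closed unit ball of the cross-entropy loss
`L(m) = -log( exp(⟪e_k, m⟫) / ∑_j exp(⟪e_j, m⟫) )`. -/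
theorem ce_unique_minimizer_etf (d K : ℕ) (hK : 2 ≤ K) (hd : K - 1 ≤ d)
    (e : Fin K → EuclideanSpace ℝ (Fin d))
    (hnorm : ∀ k, ‖e k‖ = 1)
    (hangle : ∀ i j : Fin K, i ≠ j → ⟪e i, e j⟫ = -1 / ((K : ℝ) - 1))
    (k : Fin K)
    (L : EuclideanSpace ℝ (Fin d) → ℝ)
    (hL : ∀ m, L m = -Real.log (Real.exp ⟪e k, m⟫ / ∑ j, Real.exp ⟪e j, m⟫)) :
    ∀ m : EuclideanSpace ℝ (Fin d), ‖m‖ ≤ 1 →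
      L (e k) ≤ L m ∧ (L m = L (e k) ↔ m = e k) := by
  have hK1 : (1:ℝ) ≤ (K:ℝ) - 1 := by
    have : (2:ℝ) ≤ (K:ℝ) := by exact_mod_cast hK
    linarith
  set c : ℝ := (K:ℝ) - 1 with hc
  have hc0 : 0 < c := by linarith
  have hself : ∀ i, ⟪e i, e i⟫ = 1 := by
    intro i
    rw [real_inner_self_eq_norm_mul_norm, hnorm i]; norm_num
  have hcardE : ∀ i : Fin K, ((univ.erase i).card : ℝ) = c := by
    intro i
    rw [Finset.card_erase_of_mem (mem_univ i), Finset.card_univ, Fintype.card_fin]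
    have hK1' : 1 ≤ K := by omega
    push_cast [Nat.cast_sub hK1']
    ring
  -- each row of the Gram matrix sums to 0
  have hrow : ∀ i : Fin K, ∑ j, ⟪e i, e j⟫ = 0 := by
    intro i
    rw [← Finset.add_sum_erase _ _ (mem_univ i), hself i]
    have : ∑ j ∈ univ.erase i, ⟪e i, e j⟫ = ∑ j ∈ univ.erase i, (-1 / c) := by
      refine Finset.sum_congr rfl fun j hj => ?_
      exact hangle i j (Ne.symm (Finset.ne_of_mem_erase hj))
    rw [this, Finset.sum_const, nsmul_eq_mul, hcardE i]
    field_simp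
    ring
  -- the prototypes sum to zero
  have hsum0 : ∑ j, e j = 0 := by
    have h : ⟪∑ i, e i, ∑ j, e j⟫ = 0 := by
      rw [sum_inner]
      refine Finset.sum_eq_zero fun i _ => ?_
      rw [inner_sum]
      exact hrow i
    exact inner_self_eq_zero.mp h
  have hinnersum : ∀ m : EuclideanSpace ℝ (Fin d), ∑ j, ⟪e j, m⟫ = 0 := by
    intro m
    rw [← sum_inner, hsum0, inner_zero_left]
  -- the comparison function
  set G : ℝ → ℝ := fun t => Real.log (1 + c * Real.exp (-((K:ℝ)/c) * t)) with hGdef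
  have hGpos : ∀ t : ℝ, 0 < 1 + c * Real.exp (-((K:ℝ)/c) * t) := by
    intro t; positivity
  have hGanti : ∀ s t : ℝ, s < t → G t < G s := by
    intro s t hst
    apply Real.log_lt_log (hGpos t)
    have : Real.exp (-((K:ℝ)/c) * t) < Real.exp (-((K:ℝ)/c) * s) := by
      apply Real.exp_lt_exp.mpr
      have hKc : 0 < (K:ℝ)/c := by positivity
      nlinarith
    nlinarith
  have hGanti' : ∀ s t : ℝ, s ≤ t → G t ≤ G s := by
    intro s t hst
    rcases eq_or_lt_of_le hst with h | h
    · rw [h]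
    · exact le_of_lt (hGanti s t h)
  -- rewriting of the shifted log-sum
  have hGeq : ∀ t : ℝ, Real.log (Real.exp t + c * Real.exp (-t / c)) - t = G t := by
    intro t
    have h1 : Real.exp t + c * Real.exp (-t / c)
        = (1 + c * Real.exp (-((K:ℝ)/c) * t)) * Real.exp t := by
      rw [add_mul, one_mul, mul_assoc, ← Real.exp_add]
      congr 2
      congr 1
      rw [show (K:ℝ) = c + 1 by rw [hc]; ring]
      field_simp
      ring
    rw [h1, Real.log_mul (ne_of_gt (hGpos t)) (Real.exp_ne_zero t), Real.log_exp]
    ring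
  -- formula for L
  have hLform : ∀ m : EuclideanSpace ℝ (Fin d),
      L m = Real.log (∑ j, Real.exp ⟪e j, m⟫) - ⟪e k, m⟫ := by
    intro m
    have hS : 0 < ∑ j, Real.exp ⟪e j, m⟫ :=
      Finset.sum_pos (fun j _ => Real.exp_pos _) ⟨k, mem_univ k⟩
    rw [hL m, Real.log_div (Real.exp_ne_zero _) (ne_of_gt hS), Real.log_exp]
    ring
  -- Jensen's inequality bound:  L m ≥ G ⟪e k, m⟫
  have hJensen : ∀ m : EuclideanSpace ℝ (Fin d), G ⟪e k, m⟫ ≤ L m := by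
    intro m
    set t : Fin K → ℝ := fun j => ⟪e j, m⟫ with ht
    have hts : ∑ j ∈ univ.erase k, t j = - t k := by
      have := hinnersum m
      rw [← Finset.add_sum_erase _ _ (mem_univ k)] at this
      linarith
    have hw : ∑ _j ∈ univ.erase k, (1/c) = 1 := by
      rw [Finset.sum_const, nsmul_eq_mul, hcardE k]
      field_simp
    have hJ := convexOn_exp.map_sum_le (t := univ.erase k) (w := fun _ => 1/c)
      (p := t) (fun i _ => by positivity) hw (fun i _ => Set.mem_univ _)
    have hsmul : ∑ j ∈ univ.erase k, (1/c) • t j = -t k / c := by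
      simp only [smul_eq_mul, ← Finset.mul_sum, hts]
      ring
    rw [hsmul] at hJ
    have hJ2 : c * Real.exp (-t k / c) ≤ ∑ j ∈ univ.erase k, Real.exp (t j) := by
      simp only [smul_eq_mul] at hJ
      rw [← Finset.mul_sum] at hJ
      have h := mul_le_mul_of_nonneg_left hJ hc0.le
      calc c * Real.exp (-t k / c)
          ≤ c * (1 / c * ∑ j ∈ univ.erase k, Real.exp (t j)) := h
        _ = ∑ j ∈ univ.erase k, Real.exp (t j) := by field_simp
    have hS : Real.exp (t k) + c * Real.exp (-t k / c) ≤ ∑ j, Real.exp (t j) := by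
      rw [← Finset.add_sum_erase _ _ (mem_univ k)]
      linarith
    have hpos : 0 < Real.exp (t k) + c * Real.exp (-t k / c) := by positivity
    have := Real.log_le_log hpos hS
    rw [hLform m]
    have : Real.log (Real.exp (t k) + c * Real.exp (-t k / c)) - t k
        ≤ Real.log (∑ j, Real.exp (t j)) - t k := by linarith
    calc G (t k) = _ := (hGeq (t k)).symm
      _ ≤ _ := this
  -- value at the minimizer
  have hLek : L (e k) = G 1 := by
    rw [hLform (e k)]
    have hS0 : ∑ j, Real.exp ⟪e j, e k⟫ = Real.exp 1 + c * Real.exp (-1 / c) := by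
      rw [← Finset.add_sum_erase _ _ (mem_univ k), hself k]
      congr 1
      have : ∑ j ∈ univ.erase k, Real.exp ⟪e j, e k⟫
          = ∑ _j ∈ univ.erase k, Real.exp (-1 / c) := by
        refine Finset.sum_congr rfl fun j hj => ?_
        rw [hangle j k (Finset.ne_of_mem_erase hj)]
      rw [this, Finset.sum_const, nsmul_eq_mul, hcardE k]
    rw [hS0, hself k]
    exact hGeq 1
  intro m hm
  have htk1 : ⟪e k, m⟫ ≤ 1 := by
    calc ⟪e k, m⟫ ≤ ‖e k‖ * ‖m‖ := real_inner_le_norm _ _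
      _ = ‖m‖ := by rw [hnorm k, one_mul]
      _ ≤ 1 := hm
  have hmain : L (e k) ≤ L m := by
    rw [hLek]
    exact le_trans (hGanti' _ _ htk1) (hJensen m)
  refine ⟨hmain, ?_, fun h => by rw [h]⟩
  intro heq
  by_contra hne
  have htklt : ⟪e k, m⟫ < 1 := by
    rcases lt_or_eq_of_le htk1 with h | h
    · exact h
    · exfalso
      have hnm : ‖m‖ = 1 := by
        have : (1:ℝ) ≤ ‖m‖ := by
          calc (1:ℝ) = ⟪e k, m⟫ := h.symm
            _ ≤ ‖e k‖ * ‖m‖ := real_inner_le_norm _ _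
            _ = ‖m‖ := by rw [hnorm k, one_mul]
        linarith
      exact hne ((inner_eq_one_iff_of_norm_eq_one (hnorm k) hnm).mp h).symm
  have : G 1 < G ⟪e k, m⟫ := hGanti _ _ htklt
  have := lt_of_lt_of_le this (hJensen m)
  rw [← hLek, heq] at this
  exact lt_irrefl _ this
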